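/- For any nontrivial connected graph G, the partition dimension of G is at most the metric dimension of G plus one, i.e., pd(G) ≤ dim(G) + 1. -/

import Mathlib

open SimpleGraph

variable {V : Type*}

/-- Distance from a vertex to a set of vertices: `min_{u ∈ P} d(v,u)`. -/
noncomputable def distSet (G : SimpleGraph V) (v : V) (P : Set V) : ℕ :=
  sInf ((G.dist v) '' P)

/-- An ordered partition of `V` into `t` (nonempty) classes, encoded by a surjective
map `c : V → Fin t`, is resolving if distinct vertices have distinct partition
representations, i.e. distinct vectors of distances to the classes. -/
def IsResolvingPartition (G : SimpleGraph V) {t : ℕ} (c : V → Fin t) : Prop :=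
  Function.Surjective c ∧
    ∀ u v : V, (∀ i : Fin t, distSet G u {x | c x = i} = distSet G v {x | c x = i}) → u = v

/-- The partition dimension: the least `t` admitting a resolving partition into `t` classes. -/
noncomputable def partitionDim (G : SimpleGraph V) : ℕ :=
  sInf {t : ℕ | ∃ c : V → Fin t, IsResolvingPartition G c}

/-- A set `S` is a resolving set if distinct vertices have distinct vectors of
distances to the elements of `S`. -/
def IsResolvingSet (G : SimpleGraph V) (S : Set V) : Prop :=
  ∀ u v : V, (∀ w ∈ S, G.dist u w = G.dist v w) → u = v

/-- The metric dimension: the least cardinality of a resolving set. -/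
noncomputable def metricDim (G : SimpleGraph V) : ℕ :=
  sInf {k : ℕ | ∃ S : Set V, S.ncard = k ∧ IsResolvingSet G S}

/-- A leaf is a vertex of degree one. -/
def IsLeaf (G : SimpleGraph V) (v : V) : Prop := (G.neighborSet v).ncard = 1

/-- A major vertex is a vertex of degree at least three. -/
def IsMajor (G : SimpleGraph V) (v : V) : Prop := 3 ≤ (G.neighborSet v).ncard

/-- A path graph: a tree in which every vertex has degree at most two. -/
def IsPathGraph (G : SimpleGraph V) : Prop :=
  G.IsTree ∧ ∀ v : V, (G.neighborSet v).ncard ≤ 2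

/-- `u` is a terminal vertex of the major vertex `v` if `u` is a leaf and
`d(u,v) < d(u,w)` for every other major vertex `w`. -/
def IsTerminalOf (G : SimpleGraph V) (u v : V) : Prop :=
  IsLeaf G u ∧ IsMajor G v ∧ ∀ w : V, IsMajor G w → w ≠ v → G.dist u v < G.dist u w

/-- The terminal degree of a vertex: its number of terminal vertices. -/
noncomputable def terminalDegree (G : SimpleGraph V) (v : V) : ℕ :=
  {u | IsTerminalOf G u v}.ncard

/-- An exterior major vertex: a major vertex with positive terminal degree. -/
def IsExteriorMajor (G : SimpleGraph V) (v : V) : Prop :=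
  IsMajor G v ∧ 0 < terminalDegree G v

/-- `n₁(G)`: the number of leaves. -/
noncomputable def numLeaves (G : SimpleGraph V) : ℕ := {v | IsLeaf G v}.ncard

/-- `ex(G)`: the number of exterior major vertices. -/
noncomputable def numExteriorMajor (G : SimpleGraph V) : ℕ := {v | IsExteriorMajor G v}.ncard

/-- A support vertex: a vertex adjacent to a leaf. -/
def IsSupport (G : SimpleGraph V) (v : V) : Prop := ∃ u, G.Adj v u ∧ IsLeaf G u

/-- `ξ(G)`: the number of support vertices. -/
noncomputable def numSupport (G : SimpleGraph V) : ℕ := {v | IsSupport G v}.ncard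

/-- `θ(G)`: the maximum number of leaves adjacent to a single support vertex. -/
noncomputable def maxLeavesAtSupport (G : SimpleGraph V) : ℕ :=
  sSup {n : ℕ | ∃ v, IsSupport G v ∧ n = {u | G.Adj v u ∧ IsLeaf G u}.ncard}

lemma distSet_singleton (G : SimpleGraph V) (v s : V) : distSet G v {s} = G.dist v s := by
  simp [distSet]

theorem partitionDim_le_metricDim_add_one {V : Type*} [Fintype V] (G : SimpleGraph V)
    (hG : G.Connected) (hV : 2 ≤ Fintype.card V) :
    partitionDim G ≤ metricDim G + 1 := by
  classical
  -- The universal set is resolving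
  have huniv : IsResolvingSet G (Set.univ : Set V) := by
    intro u v h
    have := h u (Set.mem_univ u)
    rw [SimpleGraph.dist_self] at this
    exact (hG.dist_eq_zero_iff.mp this.symm).symm
  have hne : {k : ℕ | ∃ S : Set V, S.ncard = k ∧ IsResolvingSet G S}.Nonempty :=
    ⟨(Set.univ : Set V).ncard, Set.univ, rfl, huniv⟩
  obtain ⟨S, hScard, hSres⟩ := Nat.sInf_mem hne
  set k := metricDim G with hk
  -- S ≠ univ
  have hSne : S ≠ Set.univ := by
    intro hSU
    obtain ⟨v₀⟩ : Nonempty V := Fintype.card_pos_iff.mp (by omega)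
    have hres' : IsResolvingSet G (Set.univ \ {v₀}) := by
      intro u v h
      by_cases huv : u = v
      · exact huv
      · by_cases hu : u = v₀
        · have hv : v ∈ Set.univ \ {v₀} := ⟨Set.mem_univ v, fun h' => huv (hu.trans (Set.mem_singleton_iff.mp h').symm)⟩
          have := h v hv
          rw [SimpleGraph.dist_self] at this
          exact absurd (hG.dist_eq_zero_iff.mp this) huv
        · have hu' : u ∈ Set.univ \ {v₀} := ⟨Set.mem_univ u, hu⟩
          have := h u hu'
          rw [SimpleGraph.dist_self] at this
          exact (hG.dist_eq_zero_iff.mp this.symm).symm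
    have hle : k ≤ (Set.univ \ {v₀} : Set V).ncard :=
      Nat.sInf_le (show (Set.univ \ {v₀} : Set V).ncard ∈
        {k : ℕ | ∃ S : Set V, S.ncard = k ∧ IsResolvingSet G S} from
        ⟨(Set.univ \ {v₀} : Set V), rfl, hres'⟩)
    have hcard : (Set.univ \ {v₀} : Set V).ncard = Fintype.card V - 1 := by
      rw [Set.ncard_diff (by simp), Set.ncard_univ, Set.ncard_singleton, Nat.card_eq_fintype_card]
    have hkcard : k = Fintype.card V := by
      have h2 : S.ncard = Fintype.card V := by
        rw [hSU, Set.ncard_univ, Nat.card_eq_fintype_card]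
      rw [← h2]; exact hScard.symm
    omega
  obtain ⟨v₀, hv₀⟩ : ∃ v, v ∉ S := by
    by_contra h
    push_neg at h
    exact hSne (Set.eq_univ_of_forall h)
  -- equiv S ≃ Fin k
  have hSfin : S.Finite := Set.toFinite S
  have hcard : hSfin.toFinset.card = k := by
    rw [Set.ncard_eq_toFinset_card' S] at hScard
    simp at hScard ⊢; exact hScard
  let e : {x // x ∈ hSfin.toFinset} ≃ Fin k := hSfin.toFinset.equivFinOfCardEq hcard
  let c : V → Fin (k + 1) := fun v =>
    if h : v ∈ S then Fin.castSucc (e ⟨v, hSfin.mem_toFinset.mpr h⟩) else Fin.last k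
  refine Nat.sInf_le (show k + 1 ∈ {t : ℕ | ∃ c : V → Fin t, IsResolvingPartition G c} from
    ⟨c, ?_, ?_⟩)
  · intro i
    refine Fin.lastCases ?_ ?_ i
    · exact ⟨v₀, by simp [c, hv₀]⟩
    · intro j
      refine ⟨(e.symm j).1, ?_⟩
      have hm : ((e.symm j).1 : V) ∈ S := hSfin.mem_toFinset.mp (e.symm j).2
      simp only [c, dif_pos hm]
      congr 1
      exact e.apply_symm_apply j
  · intro u v h
    apply hSres
    intro s hs
    have hclass : {x | c x = Fin.castSucc (e ⟨s, hSfin.mem_toFinset.mpr hs⟩)} = {s} := by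
      ext x
      simp only [Set.mem_setOf_eq, Set.mem_singleton_iff]
      constructor
      · intro hx
        by_cases hxS : x ∈ S
        · simp only [c, dif_pos hxS] at hx
          have := Fin.castSucc_injective _ hx
          have := e.injective this
          exact congrArg Subtype.val this
        · simp only [c, dif_neg hxS] at hx
          exact absurd hx.symm (Fin.castSucc_lt_last _).ne
      · rintro rfl
        simp [c, hs]
    have := h (Fin.castSucc (e ⟨s, hSfin.mem_toFinset.mpr hs⟩))
    rwa [hclass, distSet_singleton, distSet_singleton] at this
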